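/- With A, q, δ, δ' as above (column sums of A at most 1, each A_j q > 0, δ > 0, GIS update δ'_i = δ_i Π_j (A_j q/A_j δ)^{a_{ji}}), the specialization z = q yields D(q, δ') ≤ D(q, δ) − D(Aq, Aδ), where on the right D(Aq, Aδ) = Σ_j A_j q · log(A_j q / A_j δ) − (Σ_j A_j q − Σ_j A_j δ) is the Bregman divergence between the vectors Aq and Aδ in ℝ^J. -/
import Mathlib

open Finset Real

lemma amgm_le_one {n : ℕ} (w z : Fin n → ℝ) (hw : ∀ j, 0 ≤ w j)
    (hw1 : ∑ j, w j ≤ 1) (hz : ∀ j, 0 ≤ z j) :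
    ∏ j, z j ^ w j ≤ 1 + ∑ j, w j * (z j - 1) := by
  have key := Real.geom_mean_le_arith_mean_weighted (Finset.univ : Finset (Option (Fin n)))
    (fun o => o.elim (1 - ∑ j, w j) w) (fun o => o.elim 1 z)
    (fun o _ => by cases o with
      | none => simpa using hw1
      | some j => exact hw j)
    (by simp [Fintype.sum_option])
    (fun o _ => by cases o with
      | none => norm_num
      | some j => exact hz j)
  rw [Fintype.prod_option, Fintype.sum_option] at key
  simp only [Option.elim] at key
  rw [Real.one_rpow, one_mul] at key
  calc ∏ j, z j ^ w j ≤ (1 - ∑ j, w j) * 1 + ∑ j, w j * z j := key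
    _ = 1 + ∑ j, w j * (z j - 1) := by
        simp [mul_sub, Finset.sum_sub_distrib]; ring

/-- Specializing `z = q` in the GIS step inequality yields
`D(q, δ') ≤ D(q, δ) − D(Aq, Aδ)`, where the right-hand Bregman divergence is
between the vectors `Aq` and `Aδ` in `ℝ^J`. -/
theorem gis_step_bregman_decrease (J I : ℕ) (A : Fin J → Fin I → ℝ)
    (hA : ∀ j i, 0 ≤ A j i) (hcol : ∀ i, (∑ j, A j i) ≤ 1)
    (q : Fin I → ℝ) (hq : ∀ i, 0 < q i)
    (hAq : ∀ j, 0 < ∑ i, A j i * q i)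
    (δ : Fin I → ℝ) (hδ : ∀ i, 0 < δ i)
    (δ' : Fin I → ℝ)
    (hδ' : ∀ i, δ' i =
      δ i * ∏ j, ((∑ i', A j i' * q i') / (∑ i', A j i' * δ i')) ^ (A j i)) :
    (∑ i, q i * Real.log (q i / δ' i)) - ((∑ i, q i) - (∑ i, δ' i)) ≤
      ((∑ i, q i * Real.log (q i / δ i)) - ((∑ i, q i) - (∑ i, δ i)))
      - ((∑ j, (∑ i, A j i * q i) *
            Real.log ((∑ i, A j i * q i) / (∑ i, A j i * δ i)))
         - ((∑ j, ∑ i, A j i * q i) - (∑ j, ∑ i, A j i * δ i))) := by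
  set sq : Fin J → ℝ := fun j => ∑ i, A j i * q i with hsq
  set sδ : Fin J → ℝ := fun j => ∑ i, A j i * δ i with hsδ
  -- positivity of sδ
  have hsδpos : ∀ j, 0 < sδ j := by
    intro j
    by_contra h
    push_neg at h
    have h0 : sδ j = 0 :=
      le_antisymm h (Finset.sum_nonneg fun i _ => mul_nonneg (hA j i) (hδ i).le)
    have hAz : ∀ i, A j i = 0 := by
      intro i
      have := (Finset.sum_eq_zero_iff_of_nonneg
        (fun i _ => mul_nonneg (hA j i) (hδ i).le)).mp h0 i (Finset.mem_univ i)
      exact (mul_eq_zero.mp this).resolve_right (hδ i).ne'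
    have : sq j = 0 := Finset.sum_eq_zero fun i _ => by rw [hAz i, zero_mul]
    exact absurd this (hAq j).ne'
  set r : Fin J → ℝ := fun j => sq j / sδ j with hr
  have hrpos : ∀ j, 0 < r j := fun j => div_pos (hAq j) (hsδpos j)
  -- log of δ'
  have hlogδ' : ∀ i, Real.log (δ' i) = Real.log (δ i) + ∑ j, A j i * Real.log (r j) := by
    intro i
    rw [hδ' i, Real.log_mul (hδ i).ne'
      (Finset.prod_pos fun j _ => Real.rpow_pos_of_pos (hrpos j) _).ne', Real.log_prod]
    · congr 1
      exact Finset.sum_congr rfl fun j _ => Real.log_rpow (hrpos j) _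
    · intro j _
      exact (Real.rpow_pos_of_pos (hrpos j) _).ne'
  -- log sum identity
  have hid : ∑ i, q i * Real.log (q i / δ' i)
      = (∑ i, q i * Real.log (q i / δ i)) - ∑ j, sq j * Real.log (r j) := by
    have : ∀ i, q i * Real.log (q i / δ' i)
        = q i * Real.log (q i / δ i) - ∑ j, (A j i * q i) * Real.log (r j) := by
      intro i
      have h1 : δ' i ≠ 0 := by
        rw [hδ' i]
        exact (mul_pos (hδ i)
          (Finset.prod_pos fun j _ => Real.rpow_pos_of_pos (hrpos j) _)).ne'
      rw [Real.log_div (hq i).ne' h1, Real.log_div (hq i).ne' (hδ i).ne', hlogδ' i]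
      have hS : ∑ j, (A j i * q i) * Real.log (r j) = q i * ∑ j, A j i * Real.log (r j) := by
        rw [Finset.mul_sum]; exact Finset.sum_congr rfl fun j _ => by ring
      rw [hS]; ring
    rw [Finset.sum_congr rfl fun i _ => this i, Finset.sum_sub_distrib]
    congr 1
    rw [Finset.sum_comm]
    exact Finset.sum_congr rfl fun j _ => by rw [hsq, ← Finset.sum_mul]
  -- sum δ' bound
  have hsum : ∑ i, δ' i ≤ (∑ i, δ i) + ((∑ j, sq j) - (∑ j, sδ j)) := by
    have hpt : ∀ i, δ' i ≤ δ i * (1 + ∑ j, A j i * (r j - 1)) := by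
      intro i
      rw [hδ' i]
      exact mul_le_mul_of_nonneg_left
        (amgm_le_one (fun j => A j i) r (fun j => hA j i) (hcol i)
          (fun j => (hrpos j).le)) (hδ i).le
    calc ∑ i, δ' i ≤ ∑ i, δ i * (1 + ∑ j, A j i * (r j - 1)) :=
          Finset.sum_le_sum fun i _ => hpt i
      _ = (∑ i, δ i) + ∑ i, ∑ j, (A j i * δ i) * (r j - 1) := by
          rw [← Finset.sum_add_distrib]
          exact Finset.sum_congr rfl fun i _ => by
            rw [mul_add, mul_one, Finset.mul_sum]
            congr 1
            exact Finset.sum_congr rfl fun j _ => by ring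
      _ = (∑ i, δ i) + ((∑ j, sq j) - (∑ j, sδ j)) := by
          congr 1
          rw [Finset.sum_comm, ← Finset.sum_sub_distrib]
          refine Finset.sum_congr rfl fun j _ => ?_
          rw [← Finset.sum_mul]
          have : sδ j * (r j - 1) = sq j - sδ j := by
            rw [hr]
            rw [mul_sub, mul_one, mul_div_cancel₀ _ (hsδpos j).ne']
          simpa [hsδ] using this
  -- conclude
  have hlogr : ∀ j, Real.log ((∑ i, A j i * q i) / (∑ i, A j i * δ i)) = Real.log (r j) :=
    fun j => rfl
  simp only [hlogr]
  rw [hid]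
  linarith [hsum]
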